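/- Every finite group of odd order that has a subgroup of index 5 has a normal subgroup of index 5. -/

import Mathlib

/-- Every finite group of odd order that has a subgroup of index `5` has a normal
subgroup of index `5`. -/
theorem odd_order_index_five_normal (G : Type*) [Group G] [Finite G]
    (hodd : Odd (Nat.card G)) (h : ∃ H : Subgroup G, H.index = 5) :
    ∃ N : Subgroup G, N.Normal ∧ N.index = 5 := by
  obtain ⟨H, hH⟩ := h
  set N := H.normalCore with hN
  have hNnormal : N.Normal := H.normalCore_normal
  have h5 : 5 ∣ N.index := hH ▸ Subgroup.index_dvd_of_le H.normalCore_le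
  have hdvdG : N.index ∣ Nat.card G := N.index_dvd_card
  have hOddIdx : Odd N.index := by
    rcases hodd.of_dvd_nat hdvdG with h
    exact h
  have h120 : N.index ∣ 120 := by
    have hcard5 : Nat.card (G ⧸ H) = 5 := by rw [← Subgroup.index_eq_card, hH]
    have hperm : Nat.card (Equiv.Perm (G ⧸ H)) = 120 := by
      classical
      cases nonempty_fintype (G ⧸ H)
      rw [Nat.card_eq_fintype_card] at hcard5 ⊢
      rw [Fintype.card_perm, hcard5]
      norm_num [Nat.factorial]
    rw [hN, Subgroup.normalCore_eq_ker, Subgroup.index_ker, ← hperm]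
    exact Subgroup.card_subgroup_dvd_card _
  have h15 : N.index ∣ 15 := by
    have hcop : Nat.Coprime (N.index) 8 :=
      Nat.Coprime.pow_right 3 (hOddIdx.coprime_two_right)
    exact hcop.dvd_of_dvd_mul_left (by rw [show (8*15:ℕ) = 120 by norm_num]; exact h120)
  have hle : N.index ≤ 15 := Nat.le_of_dvd (by norm_num) h15
  have hcases : N.index = 5 ∨ N.index = 15 := by
    interval_cases h : N.index <;> revert h15 h5 <;> decide
  rcases hcases with h5idx | h15idx
  · exact ⟨N, hNnormal, h5idx⟩
  · -- quotient has order 15; its Sylow 3-subgroup is normal of index 5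
    set Q := G ⧸ N
    have hQ : Nat.card Q = 15 := by rw [← Subgroup.index_eq_card, h15idx]
    haveI : Fact (Nat.Prime 3) := ⟨by norm_num⟩
    obtain ⟨P⟩ : Nonempty (Sylow 3 Q) := inferInstance
    have hPcard : Nat.card (P : Subgroup Q) = 3 := by
      rw [Sylow.card_eq_multiplicity, hQ]
      rw [show (15:ℕ) = 3 * 5 by norm_num, Nat.factorization_mul (by norm_num) (by norm_num)]
      rw [Nat.Prime.factorization (by norm_num), Nat.Prime.factorization (by norm_num)]
      simp [Finsupp.single_apply]
    have hPindex : (P : Subgroup Q).index = 5 := by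
      have hmul := Subgroup.card_mul_index (P : Subgroup Q)
      rw [hQ, hPcard] at hmul
      omega
    have hSylDvd : Nat.card (Sylow 3 Q) ∣ 5 := hPindex ▸ Sylow.card_dvd_index P
    have hSylMod : Nat.card (Sylow 3 Q) ≡ 1 [MOD 3] := card_sylow_modEq_one 3 Q
    have hSylOne : Nat.card (Sylow 3 Q) = 1 := by
      rcases (Nat.Prime.eq_one_or_self_of_dvd (by norm_num) _ hSylDvd) with h1 | h5'
      · exact h1
      · rw [h5'] at hSylMod
        exact absurd hSylMod (by decide)
    have hPnormal : (P : Subgroup Q).Normal := by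
      rw [← Subgroup.normalizer_eq_top_iff]
      rw [← Subgroup.index_eq_one]
      exact (Sylow.card_eq_index_normalizer P).symm.trans hSylOne
    refine ⟨(P : Subgroup Q).comap (QuotientGroup.mk' N), hPnormal.comap _, ?_⟩
    rw [Subgroup.index_comap_of_surjective _ (QuotientGroup.mk'_surjective N), hPindex]
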